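/- arXiv:2311.13676 — 2 statements merged into one kernel-verified Lean document; each statement's English description precedes it below -/
import Mathlib

section
/- Let T₁ < T₂, let k ≥ 0, let s = (s₁,…,s_k) be a spike train with T₁ < s₁ < ⋯ < s_k < T₂ (with s₀ = T₁, s_{k+1} = T₂), and let Λ : [T₁,T₂] → ℝ be strictly increasing with Λ(T₁) = 0 and Λ(T₂) > 0. Then the conditional ILR depth satisfies 0 < D_ILR(s∣k) ≤ 1, and D_ILR(s∣k) = 1 if and only if Λ(s_i) − Λ(s_{i−1}) = Λ(T₂)/(k+1) for every i = 1,…,k+1. -/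
/-- The conditional ILR depth of a spike train lies in `(0,1]`, with value `1` iff all
rescaled inter-spike intervals equal `Λ(T₂)/(k+1)`. -/
theorem ilr_depth_range (T₁ T₂ : ℝ) (hT : T₁ < T₂) (k : ℕ) (s : ℕ → ℝ)
    (hs0 : s 0 = T₁) (hsk : s (k + 1) = T₂)
    (hmono : ∀ i < k + 1, s i < s (i + 1))
    (Λ : ℝ → ℝ) (hΛ : StrictMonoOn Λ (Set.Icc T₁ T₂))
    (hΛ0 : Λ T₁ = 0) (hΛpos : 0 < Λ T₂) :
    0 < 1 / (1 - Real.log (((k : ℝ) + 1) ^ (k + 1) / (Λ T₂) ^ (k + 1) *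
        ∏ i ∈ Finset.range (k + 1), (Λ (s (i + 1)) - Λ (s i)))) ∧
    1 / (1 - Real.log (((k : ℝ) + 1) ^ (k + 1) / (Λ T₂) ^ (k + 1) *
        ∏ i ∈ Finset.range (k + 1), (Λ (s (i + 1)) - Λ (s i)))) ≤ 1 ∧
    (1 / (1 - Real.log (((k : ℝ) + 1) ^ (k + 1) / (Λ T₂) ^ (k + 1) *
        ∏ i ∈ Finset.range (k + 1), (Λ (s (i + 1)) - Λ (s i)))) = 1 ↔
      ∀ i < k + 1, Λ (s (i + 1)) - Λ (s i) = Λ T₂ / ((k : ℝ) + 1)) := by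
  set L := Λ T₂ with hL
  have hkpos : (0:ℝ) < (k:ℝ) + 1 := by positivity
  -- monotonicity of s on [0, k+1]
  have hle : ∀ j, j ≤ k + 1 → ∀ i, i ≤ j → s i ≤ s j := by
    intro j hj
    induction j with
    | zero => intro i hi; interval_cases i; exact le_rfl
    | succ n ih =>
      intro i hi
      rcases Nat.lt_or_ge i (n + 1) with h | h
      · exact le_trans (ih (by omega) i (by omega)) (le_of_lt (hmono n (by omega)))
      · have : i = n + 1 := by omega
        subst this; exact le_rfl
  have hmem : ∀ i, i ≤ k + 1 → s i ∈ Set.Icc T₁ T₂ := by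
    intro i hi
    constructor
    · rw [← hs0]; exact hle i hi 0 (Nat.zero_le _)
    · rw [← hsk]; exact hle (k + 1) le_rfl i hi
  -- positivity of increments
  have hd : ∀ i < k + 1, 0 < Λ (s (i + 1)) - Λ (s i) := by
    intro i hi
    have := hΛ (hmem i (by omega)) (hmem (i + 1) (by omega)) (hmono i hi)
    linarith
  -- sum of increments
  have hsum : ∑ i ∈ Finset.range (k + 1), (Λ (s (i + 1)) - Λ (s i)) = L := by
    rw [Finset.sum_range_sub (fun i => Λ (s i)), hsk, hs0, hΛ0, sub_zero]
  -- rewrite product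
  have hprod : ((k : ℝ) + 1) ^ (k + 1) / L ^ (k + 1) *
      ∏ i ∈ Finset.range (k + 1), (Λ (s (i + 1)) - Λ (s i)) =
      ∏ i ∈ Finset.range (k + 1), (((k : ℝ) + 1) / L * (Λ (s (i + 1)) - Λ (s i))) := by
    rw [Finset.prod_mul_distrib, Finset.prod_const, Finset.card_range, div_pow]
  rw [hprod]
  set t : ℕ → ℝ := fun i => ((k : ℝ) + 1) / L * (Λ (s (i + 1)) - Λ (s i)) with ht
  have htpos : ∀ i ∈ Finset.range (k + 1), 0 < t i := by
    intro i hi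
    have := hd i (Finset.mem_range.mp hi)
    have : 0 < (Λ (s (i + 1)) - Λ (s i)) := this
    positivity
  have hlogP : Real.log (∏ i ∈ Finset.range (k + 1), t i) =
      ∑ i ∈ Finset.range (k + 1), Real.log (t i) :=
    Real.log_prod (fun i hi => ne_of_gt (htpos i hi))
  have hsumt : ∑ i ∈ Finset.range (k + 1), (t i - 1) = 0 := by
    rw [Finset.sum_sub_distrib, ← Finset.mul_sum, hsum, Finset.sum_const,
      Finset.card_range]
    field_simp
    simp
  have hlog_le : Real.log (∏ i ∈ Finset.range (k + 1), t i) ≤ 0 := by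
    rw [hlogP, ← hsumt]
    exact Finset.sum_le_sum (fun i hi => Real.log_le_sub_one_of_pos (htpos i hi))
  have hden : (1:ℝ) ≤ 1 - Real.log (∏ i ∈ Finset.range (k + 1), t i) := by linarith
  have hdenpos : (0:ℝ) < 1 - Real.log (∏ i ∈ Finset.range (k + 1), t i) := by linarith
  refine ⟨by positivity, ?_, ?_⟩
  · rw [div_le_one hdenpos]; exact hden
  · constructor
    · intro h i hi
      -- from equality, log P = 0
      have hlog0 : Real.log (∏ i ∈ Finset.range (k + 1), t i) = 0 := by
        field_simp at h
        linarith
      -- all t i = 1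
      have hall : ∀ j ∈ Finset.range (k + 1), t j = 1 := by
        by_contra hc
        push_neg at hc
        obtain ⟨j, hj, hj1⟩ := hc
        have : ∑ i ∈ Finset.range (k + 1), Real.log (t i) <
            ∑ i ∈ Finset.range (k + 1), (t i - 1) := by
          refine Finset.sum_lt_sum
            (fun i hi => Real.log_le_sub_one_of_pos (htpos i hi)) ⟨j, hj, ?_⟩
          exact Real.log_lt_sub_one_of_pos (htpos j hj) hj1
        rw [hsumt, ← hlogP, hlog0] at this
        exact lt_irrefl _ this
      have := hall i (Finset.mem_range.mpr hi)
      rw [ht] at this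
      simp only at this
      have hLne : L ≠ 0 := ne_of_gt hΛpos
      field_simp at this ⊢
      linarith
    · intro h
      have hall : ∀ j ∈ Finset.range (k + 1), t j = 1 := by
        intro j hj
        have hjk := Finset.mem_range.mp hj
        have := h j hjk
        rw [ht]
        simp only
        rw [this]
        field_simp
      rw [Finset.prod_eq_one hall, Real.log_one, sub_zero, div_one]
end

section
/- Let T₁ < T₂, r > 0, and let w : ℕ → (0,1] be a weight function with w(k*) = 1 for some k* ∈ ℕ. For a spike train s = (s₁,…,s_k) with T₁ < s₁ < ⋯ < s_k < T₂ (s₀ = T₁, s_{k+1} = T₂), define its homogeneous-Poisson ILR depth D(s) = w(k)^r / (1 − log((k+1)^{k+1}/(T₂−T₁)^{k+1} · ∏_{i=1}^{k+1}(s_i − s_{i−1}))). Then the evenly spaced spike train s* with cardinality k*, given by s*_i = T₁ + i(T₂−T₁)/(k*+1) for i = 1,…,k*, satisfies D(s*) = 1 ≥ D(s) for every spike train s of any cardinality; moreover, among spike trains of cardinality k*, s* is the unique maximizer of D when w attains the value 1 only at k*. -/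
open Finset

private lemma log_sum_jensen (n : ℕ) (hn : 0 < n) (a : ℕ → ℝ)
    (hpos : ∀ i ∈ Finset.range n, 0 < a i) :
    ∑ i ∈ Finset.range n, (n : ℝ)⁻¹ • Real.log (a i) ≤
      Real.log (∑ i ∈ Finset.range n, (n : ℝ)⁻¹ • a i) := by
  have hn' : (n : ℝ) ≠ 0 := Nat.cast_ne_zero.mpr hn.ne'
  refine ConcaveOn.le_map_sum strictConcaveOn_log_Ioi.concaveOn
    (fun i _ => by positivity) ?_ (fun i hi => Set.mem_Ioi.mpr (hpos i hi))
  simp [Finset.sum_const, Finset.card_range, hn']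

private lemma prod_le_avg_pow (n : ℕ) (hn : 0 < n) (a : ℕ → ℝ)
    (hpos : ∀ i ∈ Finset.range n, 0 < a i) :
    ∏ i ∈ Finset.range n, a i ≤ ((∑ i ∈ Finset.range n, a i) / n) ^ n := by
  have hn' : (0:ℝ) < n := Nat.cast_pos.mpr hn
  have hP : 0 < ∏ i ∈ Finset.range n, a i := Finset.prod_pos hpos
  have hS : 0 < ∑ i ∈ Finset.range n, a i := Finset.sum_pos hpos ⟨0, Finset.mem_range.mpr hn⟩
  have hJ := log_sum_jensen n hn a hpos
  rw [← Real.log_le_log_iff hP (by positivity)]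
  rw [Real.log_prod (fun i hi => (hpos i hi).ne'), Real.log_pow]
  have h1 : ∑ i ∈ Finset.range n, (n : ℝ)⁻¹ • a i = (∑ i ∈ Finset.range n, a i) / n := by
    rw [← Finset.smul_sum]; simp [smul_eq_mul, div_eq_inv_mul]
  rw [h1] at hJ
  have h2 : ∑ i ∈ Finset.range n, (n : ℝ)⁻¹ • Real.log (a i)
      = (n:ℝ)⁻¹ * ∑ i ∈ Finset.range n, Real.log (a i) := by
    rw [← Finset.smul_sum]; simp [smul_eq_mul]
  rw [h2] at hJ
  calc ∑ i ∈ Finset.range n, Real.log (a i)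
      = (n:ℝ) * ((n:ℝ)⁻¹ * ∑ i ∈ Finset.range n, Real.log (a i)) := by
        field_simp
    _ ≤ (n:ℝ) * Real.log ((∑ i ∈ Finset.range n, a i) / n) := by
        exact mul_le_mul_of_nonneg_left hJ hn'.le

private lemma eq_of_prod_eq (n : ℕ) (hn : 0 < n) (a : ℕ → ℝ)
    (hpos : ∀ i ∈ Finset.range n, 0 < a i)
    (heq : ∏ i ∈ Finset.range n, a i = ((∑ i ∈ Finset.range n, a i) / n) ^ n) :
    ∀ i ∈ Finset.range n, ∀ j ∈ Finset.range n, a i = a j := by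
  have hn' : (0:ℝ) < n := Nat.cast_pos.mpr hn
  have hP : 0 < ∏ i ∈ Finset.range n, a i := Finset.prod_pos hpos
  have hS : 0 < ∑ i ∈ Finset.range n, a i := Finset.sum_pos hpos ⟨0, Finset.mem_range.mpr hn⟩
  have h1 : ∑ i ∈ Finset.range n, (n : ℝ)⁻¹ • a i = (∑ i ∈ Finset.range n, a i) / n := by
    rw [← Finset.smul_sum]; simp [smul_eq_mul, div_eq_inv_mul]
  have key : Real.log (∑ i ∈ Finset.range n, (n : ℝ)⁻¹ • a i)
      ≤ ∑ i ∈ Finset.range n, (n : ℝ)⁻¹ • Real.log (a i) := by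
    have hlog : Real.log (∏ i ∈ Finset.range n, a i)
        = (n:ℝ) * Real.log ((∑ i ∈ Finset.range n, a i) / n) := by
      rw [heq, Real.log_pow]
    rw [Real.log_prod (fun i hi => (hpos i hi).ne')] at hlog
    rw [h1]
    have h2 : ∑ i ∈ Finset.range n, (n : ℝ)⁻¹ • Real.log (a i)
        = (n:ℝ)⁻¹ * ∑ i ∈ Finset.range n, Real.log (a i) := by
      rw [← Finset.smul_sum]; simp [smul_eq_mul]
    rw [h2, hlog]
    field_simp
    exact le_rfl
  exact StrictConcaveOn.eq_of_map_sum_eq strictConcaveOn_log_Ioi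
    (fun i _ => by positivity)
    (by simp [Finset.sum_const, Finset.card_range, (Nat.cast_ne_zero.mpr hn.ne' : (n:ℝ) ≠ 0)])
    (fun i hi => Set.mem_Ioi.mpr (hpos i hi)) key

/-- For the homogeneous-Poisson ILR depth with cardinality weight `w` satisfying
`w k* = 1`, the evenly spaced spike train `s*` of cardinality `k*` has depth `1`,
every spike train of any cardinality has depth at most `1`, and, when `w` attains the
value `1` only at `k*`, among spike trains of cardinality `k*` the evenly spaced one is
the unique spike train of depth `1` (hence the unique maximizer). -/
theorem median_hpp_evenly_spaced (T₁ T₂ : ℝ) (hT : T₁ < T₂) (r : ℝ) (hr : 0 < r)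
    (w : ℕ → ℝ) (hw : ∀ k, 0 < w k ∧ w k ≤ 1)
    (kstar : ℕ) (hwk : w kstar = 1) :
    (w kstar ^ r / (1 - Real.log (((kstar : ℝ) + 1) ^ (kstar + 1) / (T₂ - T₁) ^ (kstar + 1) *
        ∏ i ∈ Finset.range (kstar + 1),
          ((T₁ + ((i : ℝ) + 1) * (T₂ - T₁) / ((kstar : ℝ) + 1)) -
            (T₁ + (i : ℝ) * (T₂ - T₁) / ((kstar : ℝ) + 1))))) = 1) ∧
    (∀ (k : ℕ) (s : ℕ → ℝ), s 0 = T₁ → s (k + 1) = T₂ → (∀ i < k + 1, s i < s (i + 1)) →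
      w k ^ r / (1 - Real.log (((k : ℝ) + 1) ^ (k + 1) / (T₂ - T₁) ^ (k + 1) *
        ∏ i ∈ Finset.range (k + 1), (s (i + 1) - s i))) ≤ 1) ∧
    ((∀ k, w k = 1 → k = kstar) →
      ∀ s : ℕ → ℝ, s 0 = T₁ → s (kstar + 1) = T₂ → (∀ i < kstar + 1, s i < s (i + 1)) →
        w kstar ^ r / (1 - Real.log (((kstar : ℝ) + 1) ^ (kstar + 1) / (T₂ - T₁) ^ (kstar + 1) *
          ∏ i ∈ Finset.range (kstar + 1), (s (i + 1) - s i))) = 1 →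
        ∀ i ≤ kstar + 1, s i = T₁ + (i : ℝ) * (T₂ - T₁) / ((kstar : ℝ) + 1)) := by
  have hd : (0:ℝ) < T₂ - T₁ := sub_pos.mpr hT
  have hd' : T₂ - T₁ ≠ 0 := hd.ne'
  constructor
  · -- evenly spaced train has depth 1
    have hN : ((kstar : ℝ) + 1) ≠ 0 := by positivity
    have hprod : ∏ i ∈ Finset.range (kstar + 1),
        ((T₁ + ((i : ℝ) + 1) * (T₂ - T₁) / ((kstar : ℝ) + 1)) -
          (T₁ + (i : ℝ) * (T₂ - T₁) / ((kstar : ℝ) + 1)))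
        = ((T₂ - T₁) / ((kstar : ℝ) + 1)) ^ (kstar + 1) := by
      rw [Finset.prod_congr rfl (fun i _ => ?_), Finset.prod_const, Finset.card_range]
      ring
    rw [hprod]
    have harg : ((kstar : ℝ) + 1) ^ (kstar + 1) / (T₂ - T₁) ^ (kstar + 1) *
        ((T₂ - T₁) / ((kstar : ℝ) + 1)) ^ (kstar + 1) = 1 := by
      rw [div_pow]
      field_simp
    rw [harg, Real.log_one, sub_zero, hwk, Real.one_rpow, div_one]
  constructor
  · -- every train has depth ≤ 1
    intro k s h0 h1 hmono
    set n := k + 1 with hn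
    have hposgap : ∀ i ∈ Finset.range n, 0 < s (i + 1) - s i := by
      intro i hi
      exact sub_pos.mpr (hmono i (Finset.mem_range.mp hi))
    have hsum : ∑ i ∈ Finset.range n, (s (i + 1) - s i) = T₂ - T₁ := by
      rw [Finset.sum_range_sub, h0, h1]
    have hP : 0 < ∏ i ∈ Finset.range n, (s (i + 1) - s i) := Finset.prod_pos hposgap
    have hle := prod_le_avg_pow n (Nat.succ_pos k) _ hposgap
    rw [hsum] at hle
    have hcast : ((n : ℕ) : ℝ) = (k : ℝ) + 1 := by push_cast [hn]; ring
    rw [hcast] at hle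
    have hXpos : 0 < ((k : ℝ) + 1) ^ n / (T₂ - T₁) ^ n *
        ∏ i ∈ Finset.range n, (s (i + 1) - s i) := by positivity
    have hX1 : ((k : ℝ) + 1) ^ n / (T₂ - T₁) ^ n *
        ∏ i ∈ Finset.range n, (s (i + 1) - s i) ≤ 1 := by
      calc ((k : ℝ) + 1) ^ n / (T₂ - T₁) ^ n * ∏ i ∈ Finset.range n, (s (i + 1) - s i)
          ≤ ((k : ℝ) + 1) ^ n / (T₂ - T₁) ^ n * ((T₂ - T₁) / ((k : ℝ) + 1)) ^ n := by
            exact mul_le_mul_of_nonneg_left hle (by positivity)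
        _ = 1 := by rw [div_pow]; field_simp
    have hlog : Real.log (((k : ℝ) + 1) ^ n / (T₂ - T₁) ^ n *
        ∏ i ∈ Finset.range n, (s (i + 1) - s i)) ≤ 0 :=
      Real.log_nonpos hXpos.le hX1
    have hden : (1:ℝ) ≤ 1 - Real.log (((k : ℝ) + 1) ^ n / (T₂ - T₁) ^ n *
        ∏ i ∈ Finset.range n, (s (i + 1) - s i)) := by linarith
    have hnum : w k ^ r ≤ 1 := Real.rpow_le_one (hw k).1.le (hw k).2 hr.le
    have hnum0 : (0:ℝ) ≤ w k ^ r := Real.rpow_nonneg (hw k).1.le r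
    rw [div_le_one (by linarith)]
    linarith
  · -- uniqueness
    intro hw1 s h0 h1 hmono hdepth i hi
    set n := kstar + 1 with hn
    have hN : (0:ℝ) < (kstar : ℝ) + 1 := by positivity
    have hposgap : ∀ j ∈ Finset.range n, 0 < s (j + 1) - s j := by
      intro j hj
      exact sub_pos.mpr (hmono j (Finset.mem_range.mp hj))
    have hsum : ∑ j ∈ Finset.range n, (s (j + 1) - s j) = T₂ - T₁ := by
      rw [Finset.sum_range_sub, h0, h1]
    have hP : 0 < ∏ j ∈ Finset.range n, (s (j + 1) - s j) := Finset.prod_pos hposgap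
    have hXpos : 0 < ((kstar : ℝ) + 1) ^ n / (T₂ - T₁) ^ n *
        ∏ j ∈ Finset.range n, (s (j + 1) - s j) := by positivity
    rw [hwk, Real.one_rpow] at hdepth
    have hden : 1 - Real.log (((kstar : ℝ) + 1) ^ n / (T₂ - T₁) ^ n *
        ∏ j ∈ Finset.range n, (s (j + 1) - s j)) = 1 := by
      have hne : 1 - Real.log (((kstar : ℝ) + 1) ^ n / (T₂ - T₁) ^ n *
          ∏ j ∈ Finset.range n, (s (j + 1) - s j)) ≠ 0 := by
        intro h
        rw [h, div_zero] at hdepth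
        exact one_ne_zero hdepth.symm
      rw [div_eq_one_iff_eq hne] at hdepth
      exact hdepth.symm
    have hlog0 : Real.log (((kstar : ℝ) + 1) ^ n / (T₂ - T₁) ^ n *
        ∏ j ∈ Finset.range n, (s (j + 1) - s j)) = 0 := by linarith
    have hX1 : ((kstar : ℝ) + 1) ^ n / (T₂ - T₁) ^ n *
        ∏ j ∈ Finset.range n, (s (j + 1) - s j) = 1 := by
      rcases Real.log_eq_zero.mp hlog0 with h | h | h
      · exact absurd h hXpos.ne'
      · exact h
      · linarith [hXpos]
    have hPeq : ∏ j ∈ Finset.range n, (s (j + 1) - s j)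
        = ((T₂ - T₁) / ((kstar : ℝ) + 1)) ^ n := by
      have hC : ((kstar : ℝ) + 1) ^ n / (T₂ - T₁) ^ n ≠ 0 := by positivity
      rw [div_pow]
      field_simp at hX1 ⊢
      linarith [hX1]
    have hall := eq_of_prod_eq n (Nat.succ_pos kstar) _ hposgap (by
      rw [hsum, hPeq]
      congr 1
      push_cast [hn]
      ring)
    -- every gap equals (T₂ - T₁)/(kstar+1)
    have hgap : ∀ j ∈ Finset.range n, s (j + 1) - s j = (T₂ - T₁) / ((kstar : ℝ) + 1) := by
      intro j hj
      have h0mem : (0:ℕ) ∈ Finset.range n := Finset.mem_range.mpr (Nat.succ_pos kstar)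
      have hconst : ∀ l ∈ Finset.range n, s (l + 1) - s l = s 1 - s 0 :=
        fun l hl => hall l hl 0 h0mem
      have hsum' : ((kstar : ℝ) + 1) * (s 1 - s 0) = T₂ - T₁ := by
        rw [← hsum, Finset.sum_congr rfl hconst, Finset.sum_const, Finset.card_range]
        push_cast [hn]
        ring
      rw [hconst j hj]
      field_simp
      linarith [hsum']
    -- induction
    clear hdepth hlog0 hX1 hPeq hall hXpos hP hsum
    induction i with
    | zero => simp [h0]
    | succ m ih =>
      have hm : m ≤ kstar + 1 := Nat.le_of_succ_le hi
      have hmem : m ∈ Finset.range n := Finset.mem_range.mpr (Nat.lt_of_succ_le hi)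
      have := hgap m hmem
      have hsm := ih hm
      have : s (m + 1) = s m + (T₂ - T₁) / ((kstar : ℝ) + 1) := by linarith
      rw [this, hsm]
      push_cast
      ring
end
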